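/- Let n ≥ 2 be an integer. For all real x with −1/2 < x < 1/2, one has −(Π_n(x)² − Π_{n,0}²) ≥ 2x²·Π_{n,0}²·Σ_{k=1}^n (k−1/2)^{−2} − x⁴·Π_{n,0}²·( Σ_{k=1}^n (k−1/2)^{−4} + 4·Σ_{k=1}^{n−1} Σ_{j=k+1}^{n} (k−1/2)^{−2}(j−1/2)^{−2} ). -/

import Mathlib

open Finset

/-- `Π_n(x) = ∏_{k=1}^n (x² − (k−1/2)²)`. -/
noncomputable def PiN (n : ℕ) (x : ℝ) : ℝ :=
  ∏ k ∈ Finset.Icc 1 n, (x ^ 2 - ((k : ℝ) - 1 / 2) ^ 2)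

/-- `Π_{n,0} = ∏_{k=1}^n (k−1/2)²`. -/
noncomputable def PiN0 (n : ℕ) : ℝ :=
  ∏ k ∈ Finset.Icc 1 n, ((k : ℝ) - 1 / 2) ^ 2

private lemma sumIccTop (f : ℕ → ℝ) {a b : ℕ} (h : a ≤ b + 1) :
    ∑ k ∈ Icc a (b+1), f k = (∑ k ∈ Icc a b, f k) + f (b+1) := by
  have : Icc a (b+1) = insert (b+1) (Icc a b) := by
    ext k; simp [mem_Icc]; omega
  rw [this, Finset.sum_insert (by simp)]; ring

/-- Bonferroni-type bound. -/
private lemma bonf (u : ℕ → ℝ) (s : Finset ℕ) (h0 : ∀ i ∈ s, 0 ≤ u i)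
    (h1 : ∀ i ∈ s, u i ≤ 1) :
    ∏ i ∈ s, (1 - u i) ≤
      1 - (∑ i ∈ s, u i) + ((∑ i ∈ s, u i) ^ 2 - ∑ i ∈ s, (u i) ^ 2) / 2 := by
  classical
  induction s using Finset.induction_on with
  | empty => simp
  | @insert a s ha ih =>
    have h0' : ∀ i ∈ s, 0 ≤ u i := fun i hi => h0 i (mem_insert_of_mem hi)
    have h1' : ∀ i ∈ s, u i ≤ 1 := fun i hi => h1 i (mem_insert_of_mem hi)
    have hva : 0 ≤ u a := h0 a (mem_insert_self a s)
    have hva1 : u a ≤ 1 := h1 a (mem_insert_self a s)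
    have hSQ : (∑ i ∈ s, (u i) ^ 2) ≤ (∑ i ∈ s, u i) ^ 2 :=
      Finset.sum_sq_le_sq_sum_of_nonneg h0'
    have ihx := ih h0' h1'
    rw [Finset.prod_insert ha, Finset.sum_insert ha, Finset.sum_insert ha]
    set S := ∑ i ∈ s, u i
    set Q := ∑ i ∈ s, (u i) ^ 2
    have key : (1 - u a) * ∏ i ∈ s, (1 - u i) ≤ (1 - u a) * (1 - S + (S^2 - Q)/2) :=
      mul_le_mul_of_nonneg_left ihx (by linarith)
    nlinarith [mul_nonneg hva (by linarith : (0:ℝ) ≤ S^2 - Q)]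

/-- The pair-sum identity. -/
private lemma pairId (g : ℕ → ℝ) : ∀ n : ℕ,
    (∑ k ∈ Icc 1 n, g k) ^ 2 =
      (∑ k ∈ Icc 1 n, (g k) ^ 2)
        + 2 * ∑ k ∈ Icc 1 (n - 1), ∑ j ∈ Icc (k + 1) n, g k * g j := by
  intro n
  induction n with
  | zero => simp
  | succ n ih =>
    rcases Nat.eq_zero_or_pos n with hn | hn
    · subst hn; simp [Finset.Icc_self]
    · obtain ⟨m, rfl⟩ := Nat.exists_eq_add_of_le hn
      set N := 1 + m with hN
      have hNm' : N + 1 - 1 = N := by omega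
      have hinner : ∀ k ∈ Icc 1 N, (∑ j ∈ Icc (k+1) (N+1), g k * g j)
          = (∑ j ∈ Icc (k+1) N, g k * g j) + g k * g (N+1) := by
        intro k hk
        exact sumIccTop _ (by simp [mem_Icc] at hk; omega)
      rw [hNm']
      rw [sumIccTop g (by omega), sumIccTop (fun k => (g k)^2) (by omega)]
      rw [Finset.sum_congr rfl hinner, Finset.sum_add_distrib]
      have houter : (∑ k ∈ Icc 1 N, ∑ j ∈ Icc (k+1) N, g k * g j)
          = ∑ k ∈ Icc 1 (N - 1), ∑ j ∈ Icc (k+1) N, g k * g j := by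
        have h1 : (∑ k ∈ Icc 1 ((N-1)+1), ∑ j ∈ Icc (k+1) N, g k * g j)
            = (∑ k ∈ Icc 1 (N-1), ∑ j ∈ Icc (k+1) N, g k * g j)
              + ∑ j ∈ Icc ((N-1)+1+1) N, g ((N-1)+1) * g j :=
          sumIccTop _ (by omega)
        have hNN : (N - 1) + 1 = N := by omega
        rw [hNN] at h1
        rw [h1]
        have h2 : Icc (N + 1) N = (∅ : Finset ℕ) := by
          rw [Finset.Icc_eq_empty_iff]; omega
        rw [h2]; simp
      rw [houter, ← Finset.sum_mul]
      linear_combination ih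

/-- Harmonic-type bound. -/
private lemma harm (n : ℕ) (h : 1 ≤ n) :
    (∑ k ∈ Icc 1 n, (((k : ℝ) - 1/2) ^ 2)⁻¹) ≤ 5 - 1 / (n : ℝ) := by
  induction n, h using Nat.le_induction with
  | base => norm_num [Finset.Icc_self]
  | succ n hn ih =>
    rw [sumIccTop _ (by omega)]
    have hn' : (1:ℝ) ≤ n := by exact_mod_cast hn
    have hpos : (0:ℝ) < n := by linarith
    have hterm : (((((n:ℕ)+1 : ℕ) : ℝ) - 1/2) ^ 2)⁻¹ ≤ 1 / (n:ℝ) - 1 / ((n:ℝ)+1) := by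
      push_cast
      have h2 : (0:ℝ) < (n:ℝ) * ((n:ℝ)+1) := by positivity
      have h3 : (n:ℝ) * ((n:ℝ)+1) ≤ (((n:ℝ)+1) - 1/2) ^ 2 := by nlinarith
      have h4 : ((((n:ℝ)+1) - 1/2) ^ 2)⁻¹ ≤ ((n:ℝ) * ((n:ℝ)+1))⁻¹ :=
        inv_anti₀ h2 h3
      have h5 : ((n:ℝ) * ((n:ℝ)+1))⁻¹ = 1 / (n:ℝ) - 1 / ((n:ℝ)+1) := by
        field_simp
        ring
      linarith [h4, h5.le, h5.ge]
    have hrhs : (5:ℝ) - 1 / (((n:ℕ)+1 : ℕ) : ℝ) = 5 - 1 / ((n:ℝ)+1) := by push_cast; ring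
    rw [hrhs]
    linarith

set_option maxHeartbeats 1000000 in
theorem stmt3 (n : ℕ) (hn : 2 ≤ n) (x : ℝ) (hx : x ∈ Set.Ioo (-(1 / 2) : ℝ) (1 / 2)) :
    -((PiN n x) ^ 2 - (PiN0 n) ^ 2) ≥
      2 * x ^ 2 * (PiN0 n) ^ 2 * (∑ k ∈ Finset.Icc 1 n, (((k : ℝ) - 1 / 2) ^ 2)⁻¹)
        - x ^ 4 * (PiN0 n) ^ 2 *
          ((∑ k ∈ Finset.Icc 1 n, (((k : ℝ) - 1 / 2) ^ 4)⁻¹)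
            + 4 * ∑ k ∈ Finset.Icc 1 (n - 1), ∑ j ∈ Finset.Icc (k + 1) n,
                (((k : ℝ) - 1 / 2) ^ 2)⁻¹ * (((j : ℝ) - 1 / 2) ^ 2)⁻¹) := by
  obtain ⟨hx1, hx2⟩ := hx
  set t := x ^ 2 with ht
  have ht0 : 0 ≤ t := sq_nonneg x
  have ht4 : t < 1/4 := by rw [ht]; nlinarith
  set f : ℕ → ℝ := fun k => ((k : ℝ) - 1/2) ^ 2 with hf
  have hfq : ∀ k : ℕ, (1:ℝ)/4 ≤ f k := by
    intro k
    rcases Nat.eq_zero_or_pos k with h | h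
    · subst h; norm_num [hf]
    · have : (1:ℝ) ≤ k := by exact_mod_cast h
      simp only [hf]; nlinarith
  have hfpos : ∀ k : ℕ, 0 < f k := fun k => lt_of_lt_of_le (by norm_num) (hfq k)
  set g : ℕ → ℝ := fun k => (f k)⁻¹ with hg
  set u : ℕ → ℝ := fun k => t * g k with hu
  have hgpos : ∀ k : ℕ, 0 < g k := fun k => inv_pos.2 (hfpos k)
  have hu0 : ∀ k : ℕ, 0 ≤ u k := fun k => mul_nonneg ht0 (hgpos k).le
  have hu1 : ∀ k : ℕ, u k ≤ 1 := by
    intro k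
    have h1 : t ≤ f k := le_trans ht4.le (hfq k)
    have h2 := mul_le_mul_of_nonneg_right h1 (hgpos k).le
    have h3 : f k * g k = 1 := by
      simp only [hg]; exact mul_inv_cancel₀ (hfpos k).ne'
    simp only [hu]
    calc t * g k ≤ f k * g k := h2
    _ = 1 := h3
  -- notation
  set S := ∑ k ∈ Icc 1 n, g k with hS
  set Q := ∑ k ∈ Icc 1 n, (g k) ^ 2 with hQ
  set W := ∑ k ∈ Icc 1 (n-1), ∑ j ∈ Icc (k+1) n, g k * g j with hW
  have hQ4 : (∑ k ∈ Finset.Icc 1 n, (((k : ℝ) - 1 / 2) ^ 4)⁻¹) = Q := by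
    rw [hQ]
    refine Finset.sum_congr rfl fun k _ => ?_
    simp only [hg, hf]
    rw [show ((k:ℝ) - 1/2)^4 = (((k:ℝ) - 1/2)^2)^2 by ring, ← inv_pow]
  have hSrw : (∑ k ∈ Finset.Icc 1 n, (((k : ℝ) - 1 / 2) ^ 2)⁻¹) = S := by
    rw [hS]
  have hWrw : (∑ k ∈ Finset.Icc 1 (n - 1), ∑ j ∈ Finset.Icc (k + 1) n,
      (((k : ℝ) - 1 / 2) ^ 2)⁻¹ * (((j : ℝ) - 1 / 2) ^ 2)⁻¹) = W := by
    rw [hW]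
  have hpair : S ^ 2 = Q + 2 * W := by rw [hS, hQ, hW]; exact pairId g n
  -- product rewriting
  set P := ∏ k ∈ Icc 1 n, (1 - u k) with hP
  have hPiN : (PiN n x) ^ 2 = (PiN0 n) ^ 2 * P ^ 2 := by
    rw [PiN, PiN0, ← Finset.prod_pow, ← Finset.prod_pow, hP, ← Finset.prod_pow,
      ← Finset.prod_mul_distrib]
    refine Finset.prod_congr rfl fun k _ => ?_
    have hc : ((k:ℝ) - 1/2)^2 ≠ 0 := by
      have := hfpos k; simp only [hf] at this; exact this.ne'
    have e : ((k:ℝ) - 1/2)^2 * (1 - u k) = ((k:ℝ) - 1/2)^2 - t := by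
      simp only [hu, hg, hf]
      rw [mul_sub, mul_one, mul_comm t, ← mul_assoc, mul_inv_cancel₀ hc, one_mul]
    calc (x ^ 2 - ((k:ℝ) - 1/2)^2)^2 = (((k:ℝ) - 1/2)^2 - t)^2 := by rw [ht]; ring
    _ = (((k:ℝ) - 1/2)^2 * (1 - u k))^2 := by rw [e]
    _ = (((k:ℝ) - 1/2)^2)^2 * (1 - u k)^2 := by ring
  have hP0 : 0 ≤ P := by
    rw [hP]; exact Finset.prod_nonneg fun k hk => by linarith [hu1 k]
  -- Bonferroni
  have hUsum : ∑ k ∈ Icc 1 n, u k = t * S := by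
    rw [hS, Finset.mul_sum]
  have hQsum : ∑ k ∈ Icc 1 n, (u k) ^ 2 = t^2 * Q := by
    rw [hQ, Finset.mul_sum]
    refine Finset.sum_congr rfl fun k _ => ?_
    simp only [hu]; ring
  have hbonf := bonf u (Icc 1 n) (fun i _ => hu0 i) (fun i _ => hu1 i)
  rw [hUsum, hQsum, ← hP] at hbonf
  set U := t * S with hUdef
  have hQU : t^2 * Q ≤ U^2 := by
    have h := Finset.sum_sq_le_sq_sum_of_nonneg (s := Icc 1 n) (f := u)
      (fun i _ => hu0 i)
    rw [hUsum, hQsum] at h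
    exact h
  have hS0 : 0 ≤ S := by rw [hS]; exact Finset.sum_nonneg fun k _ => (hgpos k).le
  have hQ0 : 0 ≤ Q := by rw [hQ]; exact Finset.sum_nonneg fun k _ => sq_nonneg _
  have hS5 : S ≤ 5 := by
    have h1 : (1:ℕ) ≤ n := by omega
    have h2 := harm n h1
    have hnn : (0:ℝ) < 1 / (n:ℝ) := by
      have : (0:ℝ) < n := by exact_mod_cast (by omega : 0 < n)
      positivity
    rw [hSrw] at h2
    linarith
  have hU0 : 0 ≤ U := mul_nonneg ht0 hS0
  have hU54 : U ≤ 5/4 := by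
    rw [hUdef]
    nlinarith [mul_le_mul ht4.le hS5 hS0 (by norm_num : (0:ℝ) ≤ 1/4)]
  -- the scalar inequality
  have hkey : 1 - P ^ 2 ≥ 2 * t * S - t^2 * (Q + 4 * W) := by
    have h2W : 2 * W = S^2 - Q := by linarith
    have hr : t^2 * (Q + 4 * W) = 2 * U^2 - t^2 * Q := by
      rw [hUdef]; linear_combination 2 * t^2 * h2W
    rw [hr]
    set E := (U^2 - t^2*Q)/2 with hE
    have hE0 : 0 ≤ E := by rw [hE]; linarith
    have hE2U : E ≤ 2 * U := by
      have h6 : 0 ≤ t^2 * Q := mul_nonneg (sq_nonneg t) hQ0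
      have h7 : E ≤ U^2/2 := by rw [hE]; linarith
      nlinarith [mul_nonneg hU0 (by linarith : (0:ℝ) ≤ 5/4 - U)]
    have hPB : P ≤ 1 - U + E := hbonf
    have hPsq : P^2 ≤ (1 - U + E)^2 := pow_le_pow_left₀ hP0 hPB 2
    have hgoal : 1 - (1 - U + E)^2 ≥ 2*U - 2*U^2 + t^2*Q := by
      have hQuE : t^2*Q = U^2 - 2*E := by rw [hE]; ring
      rw [hQuE]
      nlinarith [mul_nonneg hE0 (by linarith : (0:ℝ) ≤ 2*U - E)]
    have h2tS : 2 * t * S = 2 * U := by rw [hUdef]; ring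
    rw [h2tS]
    linarith
  -- assemble
  have hPiN0pos : 0 < PiN0 n := by
    rw [PiN0]
    refine Finset.prod_pos fun k _ => ?_
    have := hfpos k; simp only [hf] at this; exact this
  have hsq : (0:ℝ) < (PiN0 n)^2 := by positivity
  have hx4 : x ^ 4 = t ^ 2 := by rw [ht]; ring
  rw [hQ4, hx4]
  have hfin : (PiN0 n)^2 * (2*t*S - t^2*(Q + 4*W)) ≤ (PiN0 n)^2 * (1 - P^2) :=
    mul_le_mul_of_nonneg_left hkey hsq.le
  rw [ge_iff_le]
  calc 2 * t * (PiN0 n)^2 * S - t^2 * (PiN0 n)^2 * (Q + 4 * W)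
      = (PiN0 n)^2 * (2*t*S - t^2*(Q + 4*W)) := by ring
    _ ≤ (PiN0 n)^2 * (1 - P^2) := hfin
    _ = -((PiN0 n)^2 * P^2 - (PiN0 n)^2) := by ring
    _ = -((PiN n x)^2 - (PiN0 n)^2) := by rw [hPiN]
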